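/- Let a, b ∈ ℂ² satisfy |a₁| = |b₁|, |a₂| = |b₂|, |a₁ - a₂| = |b₁ - b₂|, and |a₁ - i·a₂| = |b₁ - i·b₂|. Then the rank-one matrices agree: a·a* = b·b* (equivalently, a₁·conj(a₂) = b₁·conj(b₂)). -/

import Mathlib

/-- If two vectors in ℂ² have equal entrywise magnitudes, equal magnitude of the
difference of their entries, and equal magnitude of the `i`-twisted difference,
then the rank-one matrices `a a*` and `b b*` agree. -/
theorem stmt0 (a b : Fin 2 → ℂ)
    (h1 : ‖a 0‖ = ‖b 0‖)
    (h2 : ‖a 1‖ = ‖b 1‖)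
    (h3 : ‖a 0 - a 1‖ = ‖b 0 - b 1‖)
    (h4 : ‖a 0 - Complex.I * a 1‖ = ‖b 0 - Complex.I * b 1‖) :
    (fun j k : Fin 2 => a j * (starRingEnd ℂ) (a k)) =
      (fun j k : Fin 2 => b j * (starRingEnd ℂ) (b k)) := by
  have e1 : Complex.normSq (a 0) = Complex.normSq (b 0) := by
    rw [← Complex.sq_norm, ← Complex.sq_norm, h1]
  have e2 : Complex.normSq (a 1) = Complex.normSq (b 1) := by
    rw [← Complex.sq_norm, ← Complex.sq_norm, h2]
  have e3 : Complex.normSq (a 0 - a 1) = Complex.normSq (b 0 - b 1) := by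
    rw [← Complex.sq_norm, ← Complex.sq_norm, h3]
  have e4 : Complex.normSq (a 0 - Complex.I * a 1)
      = Complex.normSq (b 0 - Complex.I * b 1) := by
    rw [← Complex.sq_norm, ← Complex.sq_norm, h4]
  simp only [Complex.normSq_apply, Complex.sub_re, Complex.sub_im, Complex.mul_re,
    Complex.mul_im, Complex.I_re, Complex.I_im] at e1 e2 e3 e4
  have key : a 0 * (starRingEnd ℂ) (a 1) = b 0 * (starRingEnd ℂ) (b 1) := by
    apply Complex.ext
    · simp only [Complex.mul_re, Complex.mul_im, Complex.conj_re, Complex.conj_im]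
      linear_combination (e1 + e2 - e3) / 2
    · simp only [Complex.mul_re, Complex.mul_im, Complex.conj_re, Complex.conj_im]
      linear_combination (e1 + e2 - e4) / 2
  funext j k
  fin_cases j <;> fin_cases k <;>
    simp only [Fin.isValue]
  · rw [Complex.mul_conj, Complex.mul_conj]
    norm_cast

  · exact key
  · calc a 1 * (starRingEnd ℂ) (a 0)
        = (starRingEnd ℂ) (a 0 * (starRingEnd ℂ) (a 1)) := by
          simp [mul_comm]
      _ = (starRingEnd ℂ) (b 0 * (starRingEnd ℂ) (b 1)) := by rw [key]
      _ = b 1 * (starRingEnd ℂ) (b 0) := by simp [mul_comm]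
  · rw [Complex.mul_conj, Complex.mul_conj]
    norm_cast
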